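/- In the geometric-patience feedback model with p = 1 (no abandonment) and known uniform posterior: if the posterior on θ is uniform on [l, u], the constant policy at l yields value r(l)/(1-γ), and for any single-step experiment at action x ∈ (l, u] followed by optimal continuation bounded above by r(u)/(1-γ), the value is at most ((u-x)/(u-l)) (r(x) + γ r(u)/(1-γ)) + ((x-l)/(u-l)) γ r(u)/(1-γ). If r is L_r-Lipschitz and r(l) > 0, then for u - l sufficiently small (depending on u, L_r, γ, r), the constant policy at l is strictly better than any experiment at x with x - l ≥ (u-l)/2. -/
import Mathlib


/-- Feedback model with `p = 1` and uniform posterior on `(l, u)`: the constant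
policy at `l` has value `r(l)/(1-γ)`, while any one-step experiment at
`x ∈ (l, u]` followed by an optimally continued policy (bounded by `r(u)/(1-γ)`)
has value at most
`((u-x)/(u-l))(r(x) + γ r(u)/(1-γ)) + ((x-l)/(u-l)) γ r(u)/(1-γ)`.
If `r` is increasing, `L_r`-Lipschitz, nonnegative with `r(u) > 0`, then for
`u - l` sufficiently small, the constant policy at `l` is strictly better than
any experiment at `x` with `x - l ≥ (u-l)/2`. -/
theorem partial_learning_constant_beats_experiment
    (r : ℝ → ℝ) (hr_mono : Monotone r) (hr_nonneg : ∀ z, 0 ≤ r z)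
    (Lr : ℝ) (hLr : 0 ≤ Lr) (hLip : ∀ a b, |r a - r b| ≤ Lr * |a - b|)
    (γ : ℝ) (hγ : γ ∈ Set.Ioo (0 : ℝ) 1)
    (u : ℝ) (hru : 0 < r u) :
    (∀ l : ℝ, (∑' t : ℕ, γ ^ t * r l) = r l / (1 - γ)) ∧
    ∃ δ : ℝ, 0 < δ ∧
      ∀ l : ℝ, l < u → u - l < δ → 0 < r l →
        ∀ x : ℝ, l < x → x ≤ u → (u - l) / 2 ≤ x - l →
          ((u - x) / (u - l)) * (r x + γ * r u / (1 - γ))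
              + ((x - l) / (u - l)) * (γ * r u / (1 - γ))
            < r l / (1 - γ) := by
  obtain ⟨hγ0, hγ1⟩ := hγ
  have h1γ : 0 < 1 - γ := by linarith
  constructor
  · intro l
    rw [tsum_mul_right, tsum_geometric_of_lt_one (le_of_lt hγ0) hγ1]
    rw [div_eq_mul_inv, mul_comm]
  · refine ⟨(1 - γ) * r u / (2 * (Lr + 1)), by positivity, ?_⟩
    intro l hlu hδ hrl x hlx hxu hhalf
    have hd : 0 < u - l := by linarith
    have hdne : (u - l) ≠ 0 := ne_of_gt hd
    have key : ((u - x) / (u - l)) * (r x + γ * r u / (1 - γ))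
        + ((x - l) / (u - l)) * (γ * r u / (1 - γ))
        = ((u - x) / (u - l)) * r x + γ * r u / (1 - γ) := by
      field_simp
      ring
    rw [key]
    -- bound the first term by (1/2) * r u
    have hfrac : (u - x) / (u - l) ≤ 1 / 2 := by
      rw [div_le_div_iff₀ hd (by norm_num : (0:ℝ) < 2)]
      linarith
    have hfracnn : 0 ≤ (u - x) / (u - l) := by
      apply div_nonneg <;> linarith
    have hrxu : r x ≤ r u := hr_mono hxu
    have hterm : ((u - x) / (u - l)) * r x ≤ (1 / 2) * r u :=
      mul_le_mul hfrac hrxu (hr_nonneg x) (by norm_num)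
    -- Lipschitz bound on r l
    have hlip := hLip u l
    rw [abs_of_nonneg (by linarith [hr_mono (le_of_lt hlu)] : (0:ℝ) ≤ r u - r l),
      abs_of_nonneg (le_of_lt hd)] at hlip
    have hLδ : Lr * (u - l) < (1 - γ) * r u / 2 := by
      have h1 : Lr * (u - l) ≤ Lr * ((1 - γ) * r u / (2 * (Lr + 1))) := by
        apply mul_le_mul_of_nonneg_left (le_of_lt hδ) hLr
      have h2 : Lr * ((1 - γ) * r u / (2 * (Lr + 1))) < (1 - γ) * r u / 2 := by
        rw [mul_div_assoc'] at *
        rw [div_lt_div_iff₀ (by positivity) (by norm_num : (0:ℝ) < 2)]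
        have : Lr < Lr + 1 := by linarith
        nlinarith [mul_pos h1γ hru]
      linarith
    have hrl' : r u - (1 - γ) * r u / 2 < r l := by linarith
    have hfin : (1 / 2) * r u + γ * r u / (1 - γ) < r l / (1 - γ) := by
      rw [show (1:ℝ) / 2 * r u = r u / 2 by ring,
        div_add_div _ _ (by norm_num : (2:ℝ) ≠ 0) (ne_of_gt h1γ),
        div_lt_div_iff₀ (by positivity) h1γ]
      nlinarith
    linarith
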